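/- Let $V_1,\ldots,V_k$ be finite dimensional symplectic vector spaces over $\mathbb{Q}$ and let $L$ be a Lagrangian subspace of $V=\bigoplus_{i=1}^k V_i$. Then there exist Lagrangian subspaces $L_i \subseteq V_i$ such that $L$ is transverse to $\bigoplus_{i=1}^k L_i$, i.e. $L \cap \bigoplus_{i=1}^k L_i = \{0\}$. -/

import Mathlib

open Module LinearMap.BilinForm

variable {V : Type} [AddCommGroup V] [Module ℚ V] [FiniteDimensional ℚ V]

/-- Greedy: pick an element of maximal finrank in a nonempty family of submodules. -/
lemma exists_max_finrank (P : Submodule ℚ V → Prop) (hne : ∃ M, P M) :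
    ∃ M, P M ∧ ∀ M', P M' → finrank ℚ M' ≤ finrank ℚ M := by
  classical
  set s : Set ℕ := {d | ∃ M, P M ∧ finrank ℚ M = d} with hs
  have hsne : s.Nonempty := by obtain ⟨M, hM⟩ := hne; exact ⟨_, M, hM, rfl⟩
  have hbdd : BddAbove s := by
    refine ⟨finrank ℚ V, ?_⟩
    rintro d ⟨M, _, rfl⟩
    exact Submodule.finrank_le M
  obtain ⟨M, hM, hrk⟩ := Nat.sSup_mem hsne hbdd
  exact ⟨M, hM, fun M' hM' => hrk ▸ le_csSup hbdd ⟨M', hM', rfl⟩⟩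

/-- Any isotropic subspace is contained in a Lagrangian. -/
lemma extend_lagrangian (B : LinearMap.BilinForm ℚ V) (halt : B.IsAlt)
    (hnd : B.Nondegenerate) (N : Submodule ℚ V)
    (hN : ∀ x ∈ N, ∀ y ∈ N, B x y = 0) :
    ∃ M : Submodule ℚ V, (∀ x ∈ M, ∀ y ∈ M, B x y = 0) ∧
      2 * finrank ℚ M = finrank ℚ V ∧ N ≤ M := by
  obtain ⟨M, ⟨hiso, hNM⟩, hmax⟩ := exists_max_finrank
    (fun M => (∀ x ∈ M, ∀ y ∈ M, B x y = 0) ∧ N ≤ M) ⟨N, hN, le_rfl⟩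
  refine ⟨M, hiso, ?_, hNM⟩
  have hMle : M ≤ B.orthogonal M := fun x hx => by
    rw [mem_orthogonal_iff]; exact fun n hn => hiso n hn x hx
  have heq : M = B.orthogonal M := by
    by_contra hne
    obtain ⟨v, hvo, hvM⟩ := SetLike.exists_of_lt (lt_of_le_of_ne hMle hne)
    have hlt : M < M ⊔ Submodule.span ℚ {v} := by
      refine lt_of_le_of_ne le_sup_left (fun h => hvM ?_)
      exact h ▸ Submodule.mem_sup_right (Submodule.mem_span_singleton_self v)
    have hP : (∀ x ∈ M ⊔ Submodule.span ℚ {v}, ∀ y ∈ M ⊔ Submodule.span ℚ {v}, B x y = 0) ∧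
        N ≤ M ⊔ Submodule.span ℚ {v} := by
      constructor
      · intro x hx y hy
        obtain ⟨m, hm, z, hz, rfl⟩ := Submodule.mem_sup.mp hx
        obtain ⟨m', hm', z', hz', rfl⟩ := Submodule.mem_sup.mp hy
        obtain ⟨c, rfl⟩ := Submodule.mem_span_singleton.mp hz
        obtain ⟨c', rfl⟩ := Submodule.mem_span_singleton.mp hz'
        have h1 : B m v = 0 := (mem_orthogonal_iff.mp hvo) m hm
        have h2 : B v m' = 0 := by
          exact halt.isRefl m' v ((mem_orthogonal_iff.mp hvo) m' hm')
        simp [map_add, map_smul, hiso m hm m' hm', h1, h2, halt v]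
      · exact hNM.trans le_sup_left
    have := hmax _ hP
    exact absurd (Submodule.finrank_lt_finrank_of_lt hlt) (not_lt.mpr this)
  have hfr : finrank ℚ (B.orthogonal M) = finrank ℚ V - finrank ℚ M :=
    finrank_orthogonal hnd M
  have hle := Submodule.finrank_le M
  rw [← heq] at hfr
  omega

/-- For any isotropic subspace `N` there is a Lagrangian `M` with `M ⊓ N = ⊥`. -/
lemma transverse_lagrangian (B : LinearMap.BilinForm ℚ V) (halt : B.IsAlt)
    (hnd : B.Nondegenerate) (N : Submodule ℚ V)
    (hN : ∀ x ∈ N, ∀ y ∈ N, B x y = 0) :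
    ∃ M : Submodule ℚ V, (∀ x ∈ M, ∀ y ∈ M, B x y = 0) ∧
      2 * finrank ℚ M = finrank ℚ V ∧ M ⊓ N = ⊥ := by
  -- extend N to a Lagrangian N'
  obtain ⟨N', hN'iso, hN'dim, hNN'⟩ := extend_lagrangian B halt hnd N hN
  suffices h : ∃ M : Submodule ℚ V, (∀ x ∈ M, ∀ y ∈ M, B x y = 0) ∧
      2 * finrank ℚ M = finrank ℚ V ∧ M ⊓ N' = ⊥ by
    obtain ⟨M, h1, h2, h3⟩ := h
    exact ⟨M, h1, h2, le_bot_iff.mp (h3 ▸ inf_le_inf_left M hNN')⟩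
  clear hNN' hN N
  -- greedy choice of M isotropic with M ⊓ N' = ⊥
  obtain ⟨M, ⟨hiso, hdisj⟩, hmax⟩ := exists_max_finrank
    (fun M => (∀ x ∈ M, ∀ y ∈ M, B x y = 0) ∧ M ⊓ N' = ⊥)
    ⟨⊥, by simp, bot_inf_eq N'⟩
  refine ⟨M, hiso, ?_, hdisj⟩
  have hMle : M ≤ B.orthogonal M := fun x hx => by
    rw [mem_orthogonal_iff]; exact fun n hn => hiso n hn x hx
  -- claim: orthogonal M ≤ M ⊔ N'
  have hkey : B.orthogonal M ≤ M ⊔ N' := by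
    by_contra hne
    obtain ⟨v, hvo, hvMN⟩ := Set.not_subset.mp hne
    have hvM : v ∉ M := fun h => hvMN (Submodule.mem_sup_left h)
    have hlt : M < M ⊔ Submodule.span ℚ {v} := by
      refine lt_of_le_of_ne le_sup_left (fun h => hvM ?_)
      exact h ▸ Submodule.mem_sup_right (Submodule.mem_span_singleton_self v)
    have hP : (∀ x ∈ M ⊔ Submodule.span ℚ {v}, ∀ y ∈ M ⊔ Submodule.span ℚ {v}, B x y = 0) ∧
        (M ⊔ Submodule.span ℚ {v}) ⊓ N' = ⊥ := by
      constructor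
      · intro x hx y hy
        obtain ⟨m, hm, z, hz, rfl⟩ := Submodule.mem_sup.mp hx
        obtain ⟨m', hm', z', hz', rfl⟩ := Submodule.mem_sup.mp hy
        obtain ⟨c, rfl⟩ := Submodule.mem_span_singleton.mp hz
        obtain ⟨c', rfl⟩ := Submodule.mem_span_singleton.mp hz'
        have h1 : B m v = 0 := (mem_orthogonal_iff.mp hvo) m hm
        have h2 : B v m' = 0 :=
          halt.isRefl m' v ((mem_orthogonal_iff.mp hvo) m' hm')
        simp [map_add, map_smul, hiso m hm m' hm', h1, h2, halt v]
      · rw [eq_bot_iff]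
        rintro x ⟨hx1, hx2⟩
        obtain ⟨m, hm, z, hz, rfl⟩ := Submodule.mem_sup.mp hx1
        obtain ⟨c, rfl⟩ := Submodule.mem_span_singleton.mp hz
        rcases eq_or_ne c 0 with rfl | hc
        · have : m ∈ M ⊓ N' := ⟨hm, by simpa using hx2⟩
          rw [hdisj] at this
          simpa [this] using this
        · exfalso; apply hvMN
          have : v = c⁻¹ • ((m + c • v) - m) := by
            rw [add_sub_cancel_left, smul_smul, inv_mul_cancel₀ hc, one_smul]
          rw [this]
          exact Submodule.smul_mem _ _ (Submodule.sub_mem _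
            (Submodule.mem_sup_right hx2) (Submodule.mem_sup_left hm))
    have := hmax _ hP
    exact absurd (Submodule.finrank_lt_finrank_of_lt hlt) (not_lt.mpr this)
  -- N' is its own orthogonal
  have hN'orth : B.orthogonal N' = N' := by
    have hle : N' ≤ B.orthogonal N' := fun x hx => by
      rw [mem_orthogonal_iff]; exact fun n hn => hN'iso n hn x hx
    have hfr : finrank ℚ (B.orthogonal N') = finrank ℚ V - finrank ℚ N' :=
      finrank_orthogonal hnd N'
    exact (Submodule.eq_of_le_of_finrank_le hle (by omega)).symm
  -- orthogonal M ⊓ N' = ⊥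
  have hdisj2 : B.orthogonal M ⊓ N' = ⊥ := by
    rw [eq_bot_iff]
    rintro x ⟨hx1, hx2⟩
    have hx3 : x ∈ B.orthogonal (M ⊔ N') := by
      rw [mem_orthogonal_iff]
      intro n hn
      obtain ⟨m, hm, z, hz, rfl⟩ := Submodule.mem_sup.mp hn
      have e1 : B m x = 0 := (mem_orthogonal_iff.mp hx1) m hm
      have e2 : B z x = 0 := hN'iso z hz x hx2
      simp [LinearMap.BilinForm.IsOrtho, map_add, e1, e2]
    have hx4 : x ∈ B.orthogonal (B.orthogonal M) := orthogonal_le hkey hx3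
    rw [orthogonal_orthogonal hnd halt.isRefl] at hx4
    have : x ∈ M ⊓ N' := ⟨hx4, hx2⟩
    rw [hdisj] at this
    exact this
  -- dimension count
  have hfrM : finrank ℚ (B.orthogonal M) = finrank ℚ V - finrank ℚ M :=
    finrank_orthogonal hnd M
  have h1 : finrank ℚ (B.orthogonal M ⊔ N' : Submodule ℚ V) ≤ finrank ℚ (M ⊔ N' : Submodule ℚ V) :=
    Submodule.finrank_mono (sup_le_iff.mpr ⟨hkey, le_sup_right⟩)
  have h2 : finrank ℚ (B.orthogonal M ⊔ N' : Submodule ℚ V) + finrank ℚ (B.orthogonal M ⊓ N' : Submodule ℚ V)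
      = finrank ℚ (B.orthogonal M) + finrank ℚ N' := Submodule.finrank_sup_add_finrank_inf_eq _ _
  have h3 : finrank ℚ (M ⊔ N' : Submodule ℚ V) + finrank ℚ (M ⊓ N' : Submodule ℚ V)
      = finrank ℚ M + finrank ℚ N' := Submodule.finrank_sup_add_finrank_inf_eq _ _
  rw [hdisj2, finrank_bot] at h2
  rw [hdisj, finrank_bot] at h3
  have hMsub : finrank ℚ M ≤ finrank ℚ (B.orthogonal M) := Submodule.finrank_mono hMle
  have hle : finrank ℚ M ≤ finrank ℚ V := Submodule.finrank_le M
  omega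

/-- Main induction: no dimension hypothesis on `L`, just isotropy. -/
lemma main_induction : ∀ (k : ℕ) (V : Fin k → Type) [∀ i, AddCommGroup (V i)]
    [∀ i, Module ℚ (V i)] [∀ i, FiniteDimensional ℚ (V i)]
    (B : ∀ i, LinearMap.BilinForm ℚ (V i)),
    (∀ i, ∀ x, B i x x = 0) → (∀ i, (B i).Nondegenerate) →
    ∀ (L : Submodule ℚ (∀ i, V i)),
    (∀ x ∈ L, ∀ y ∈ L, ∑ i, B i (x i) (y i) = 0) →
    ∃ Li : ∀ i, Submodule ℚ (V i),
      (∀ i, (∀ x ∈ Li i, ∀ y ∈ Li i, B i x y = 0) ∧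
        2 * finrank ℚ (Li i) = finrank ℚ (V i)) ∧
      L ⊓ Submodule.pi Set.univ Li = ⊥ := by
  intro k
  induction k with
  | zero =>
    intro V _ _ _ B halt hnd L hLiso
    refine ⟨fun i => i.elim0, fun i => i.elim0, ?_⟩
    have : Subsingleton (∀ i : Fin 0, V i) := ⟨fun a b => funext fun i => i.elim0⟩
    exact Subsingleton.elim _ _
  | succ k IH =>
    intro V _ _ _ B halt hnd L hLiso
    classical
    -- the linear maps
    set sing : V 0 →ₗ[ℚ] (∀ i, V i) := LinearMap.single ℚ V 0 with hsing
    set proj0 : (∀ i, V i) →ₗ[ℚ] V 0 := LinearMap.proj 0 with hproj0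
    set tail : (∀ i, V i) →ₗ[ℚ] (∀ i : Fin k, V i.succ) :=
      LinearMap.pi (fun i : Fin k => LinearMap.proj i.succ) with htail
    -- N = {x | single 0 x ∈ L} is isotropic in V 0
    set N : Submodule ℚ (V 0) := L.comap sing with hNdef
    have hNiso : ∀ x ∈ N, ∀ y ∈ N, B 0 x y = 0 := by
      intro x hx y hy
      have := hLiso _ hx _ hy
      rwa [show ∑ i, B i (sing x i) (sing y i) = B 0 x y from ?_] at this
      rw [Finset.sum_eq_single 0]
      · simp [hsing]
      · intro i _ hi
        simp [hsing, Pi.single_eq_of_ne hi]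
      · simp
    obtain ⟨L₀, hL₀iso, hL₀dim, hL₀N⟩ :=
      transverse_lagrangian (B 0) (halt 0) (hnd 0) N hNiso
    -- L' = tail image of L ∩ {v | v 0 ∈ L₀}
    set L' : Submodule ℚ (∀ i : Fin k, V i.succ) :=
      Submodule.map tail (L ⊓ Submodule.comap proj0 L₀) with hL'def
    have hL'iso : ∀ x ∈ L', ∀ y ∈ L', ∑ i : Fin k, B i.succ (x i) (y i) = 0 := by
      rintro x hx y hy
      obtain ⟨v, ⟨hvL, hv0⟩, rfl⟩ := hx
      obtain ⟨w, ⟨hwL, hw0⟩, rfl⟩ := hy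
      have htot := hLiso v hvL w hwL
      rw [Fin.sum_univ_succ] at htot
      have h00 : B 0 (v 0) (w 0) = 0 := hL₀iso _ hv0 _ hw0
      simpa [htail, h00] using htot
    obtain ⟨Li', hLi'lag, hLi'disj⟩ := IH (fun i => V i.succ) (fun i => B i.succ)
      (fun i => halt i.succ) (fun i => hnd i.succ) L' hL'iso
    refine ⟨Fin.cases L₀ Li', fun i => ?_, ?_⟩
    · refine Fin.cases ⟨hL₀iso, hL₀dim⟩ (fun j => ?_) i
      exact hLi'lag j
    · rw [eq_bot_iff]
      intro v hv
      obtain ⟨hvL, hvpi⟩ := Submodule.mem_inf.mp hv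
      rw [Submodule.mem_pi] at hvpi
      have hv0 : v 0 ∈ L₀ := by simpa using hvpi 0 trivial
      have htv : tail v ∈ L' ⊓ Submodule.pi Set.univ Li' := by
        refine Submodule.mem_inf.mpr ⟨⟨v, ⟨hvL, hv0⟩, rfl⟩, Submodule.mem_pi.mpr ?_⟩
        intro i _
        have := hvpi i.succ trivial
        simpa [htail] using this
      rw [hLi'disj] at htv
      have htv0 : ∀ i : Fin k, v i.succ = 0 := by
        intro i
        have : tail v i = 0 := by rw [htv]; rfl
        simpa [htail] using this
      have hveq : v = sing (v 0) := by
        funext j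
        refine Fin.cases ?_ (fun i => ?_) j
        · simp [hsing]
        · simp [hsing, htv0 i, Pi.single_eq_of_ne i.succ_ne_zero]
      have hvN : v 0 ∈ N := by rw [hNdef, Submodule.mem_comap, ← hveq]; exact hvL
      have : v 0 ∈ L₀ ⊓ N := ⟨hv0, hvN⟩
      rw [hL₀N] at this
      rw [Submodule.mem_bot] at this ⊢
      rw [hveq, this, map_zero]



/-- Let `V 1, …, V k` be finite dimensional symplectic vector spaces over `ℚ` (each `B i` is a
nondegenerate alternating bilinear form) and let `L` be a Lagrangian subspace of the direct sum
(realized as the Pi type, with the sum symplectic form). Then there exist Lagrangian subspaces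
`Li i ⊆ V i` such that `L` is transverse to `⊕ i, Li i`, i.e. their intersection is trivial. -/
theorem stmt0 {k : ℕ} (V : Fin k → Type) [∀ i, AddCommGroup (V i)]
    [∀ i, Module ℚ (V i)] [∀ i, FiniteDimensional ℚ (V i)]
    (B : ∀ i, LinearMap.BilinForm ℚ (V i))
    (halt : ∀ i, ∀ x, B i x x = 0) (hnd : ∀ i, (B i).Nondegenerate)
    (L : Submodule ℚ (∀ i, V i))
    (hLiso : ∀ x ∈ L, ∀ y ∈ L, ∑ i, B i (x i) (y i) = 0)
    (hLdim : 2 * Module.finrank ℚ L = Module.finrank ℚ (∀ i, V i)) :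
    ∃ Li : ∀ i, Submodule ℚ (V i),
      (∀ i, (∀ x ∈ Li i, ∀ y ∈ Li i, B i x y = 0) ∧
        2 * Module.finrank ℚ (Li i) = Module.finrank ℚ (V i)) ∧
      L ⊓ Submodule.pi Set.univ Li = ⊥ := by
  exact main_induction k V B halt hnd L hLiso
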